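/- For all real numbers r, s with 1 < r < ∞ and 1 < s < ∞, the generalized constant π_{r,s} := 2∫₀¹ (1 - t^s)^{-1/r} dt satisfies s·π_{r,s} = r'·π_{s',r'}, where r' = r/(r-1) and s' = s/(s-1) are the conjugate exponents. -/

import Mathlib

open MeasureTheory Set intervalIntegral

private lemma rpow_image_Ioo {p : ℝ} (hp : 0 < p) :
    (fun t : ℝ => t ^ p) '' Ioo 0 1 = Ioo 0 1 := by
  ext x
  constructor
  · rintro ⟨t, ⟨ht0, ht1⟩, rfl⟩
    exact ⟨Real.rpow_pos_of_pos ht0 p, Real.rpow_lt_one ht0.le ht1 hp⟩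
  · rintro ⟨hx0, hx1⟩
    refine ⟨x ^ (1 / p), ⟨Real.rpow_pos_of_pos hx0 _,
      Real.rpow_lt_one hx0.le hx1 (by positivity)⟩, ?_⟩
    show (x ^ (1 / p)) ^ p = x
    rw [← Real.rpow_mul hx0.le, one_div_mul_cancel hp.ne', Real.rpow_one]

private lemma key (r s : ℝ) (hr : 1 < r) (hs : 1 < s) :
    s * ∫ t in (0:ℝ)..1, (1 - t ^ s) ^ (-(1 / r)) =
      ∫ u in (0:ℝ)..1, u ^ (1 / s - 1) * (1 - u) ^ (-(1 / r)) := by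
  have hs0 : 0 < s := lt_trans one_pos hs
  rw [intervalIntegral.integral_of_le (by norm_num : (0:ℝ) ≤ 1),
      intervalIntegral.integral_of_le (by norm_num : (0:ℝ) ≤ 1),
      MeasureTheory.integral_Ioc_eq_integral_Ioo,
      MeasureTheory.integral_Ioc_eq_integral_Ioo]
  have himg := rpow_image_Ioo hs0
  have hderiv : ∀ x ∈ Ioo (0:ℝ) 1,
      HasDerivWithinAt (fun t : ℝ => t ^ s) (s * x ^ (s - 1)) (Ioo 0 1) x := by
    intro x hx
    exact (Real.hasDerivAt_rpow_const (Or.inl hx.1.ne')).hasDerivWithinAt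
  have hinj : InjOn (fun t : ℝ => t ^ s) (Ioo 0 1) := by
    intro a ha b hb hab
    have : StrictMonoOn (fun t : ℝ => t ^ s) (Ioo 0 1) := fun u hu v hv huv =>
      Real.rpow_lt_rpow hu.1.le huv hs0
    exact this.injOn ha hb hab
  have := MeasureTheory.integral_image_eq_integral_abs_deriv_smul
      measurableSet_Ioo hderiv hinj
      (fun u => u ^ (1 / s - 1) * (1 - u) ^ (-(1 / r)))
  rw [himg] at this
  rw [this]
  rw [← MeasureTheory.integral_const_mul]
  refine MeasureTheory.setIntegral_congr_fun measurableSet_Ioo (fun x hx => ?_)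
  have hx0 : 0 < x := hx.1
  have h1 : |s * x ^ (s - 1)| = s * x ^ (s - 1) :=
    abs_of_pos (mul_pos hs0 (Real.rpow_pos_of_pos hx0 _))
  have h2 : (x ^ s) ^ (1 / s - 1) = x ^ (1 - s) := by
    rw [← Real.rpow_mul hx0.le]
    congr 1
    field_simp
  simp only [smul_eq_mul, h1, h2]
  have h3 : s * x ^ (s - 1) * (x ^ (1 - s) * (1 - x ^ s) ^ (-(1 / r)))
      = s * (x ^ (s - 1) * x ^ (1 - s)) * (1 - x ^ s) ^ (-(1 / r)) := by ring
  rw [h3, ← Real.rpow_add hx0]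
  norm_num

private lemma symm_beta (a b : ℝ) :
    ∫ u in (0:ℝ)..1, u ^ a * (1 - u) ^ b =
      ∫ u in (0:ℝ)..1, u ^ b * (1 - u) ^ a := by
  have := intervalIntegral.integral_comp_sub_left
      (a := (0:ℝ)) (b := 1) (fun u => u ^ b * (1 - u) ^ a) 1
  simp only [sub_zero, sub_self, sub_sub_cancel] at this
  rw [← this]
  congr 1
  ext x
  ring_nf

/-- with π_{r,s} := 2∫₀¹ (1-t^s)^(-1/r) dt, we have s·π_{r,s} = r'·π_{s',r'}. -/
theorem stmt0 (r s : ℝ) (hr : 1 < r) (hs : 1 < s) :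
    s * (2 * ∫ t in (0:ℝ)..1, (1 - t ^ s) ^ (-(1 / r))) =
      (r / (r - 1)) *
        (2 * ∫ t in (0:ℝ)..1, (1 - t ^ (r / (r - 1))) ^ (-(1 / (s / (s - 1))))) := by
  have hr0 : (0:ℝ) < r := lt_trans one_pos hr
  have hs0 : (0:ℝ) < s := lt_trans one_pos hs
  have hr1 : (0:ℝ) < r - 1 := by linarith
  have hs1 : (0:ℝ) < s - 1 := by linarith
  have hr' : 1 < r / (r - 1) := by
    rw [lt_div_iff₀ hr1]; linarith
  have hs' : 1 < s / (s - 1) := by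
    rw [lt_div_iff₀ hs1]; linarith
  have h1 := key r s hr hs
  have h2 := key (s / (s - 1)) (r / (r - 1)) hs' hr'
  have e1 : 1 / (r / (r - 1)) - 1 = -(1 / r) := by field_simp; ring
  have e2 : -(1 / (s / (s - 1))) = 1 / s - 1 := by field_simp; ring
  rw [e1, e2] at h2
  calc s * (2 * ∫ t in (0:ℝ)..1, (1 - t ^ s) ^ (-(1 / r)))
      = 2 * (s * ∫ t in (0:ℝ)..1, (1 - t ^ s) ^ (-(1 / r))) := by ring
    _ = 2 * ∫ u in (0:ℝ)..1, u ^ (1 / s - 1) * (1 - u) ^ (-(1 / r)) := by rw [h1]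
    _ = 2 * ∫ u in (0:ℝ)..1, u ^ (-(1 / r)) * (1 - u) ^ (1 / s - 1) := by
        rw [symm_beta]
    _ = 2 * ((r / (r - 1)) *
          ∫ t in (0:ℝ)..1, (1 - t ^ (r / (r - 1))) ^ (-(1 / (s / (s - 1))))) := by
        rw [e2, h2]
    _ = (r / (r - 1)) *
          (2 * ∫ t in (0:ℝ)..1, (1 - t ^ (r / (r - 1))) ^ (-(1 / (s / (s - 1))))) := by ring
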